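/- With Λ = Z^n, negative definite form, and the quadratic form g = Σ_{1 ≤ i < j ≤ k} x_i x_j, the function α ↦ g(α) on D_n^+ takes value −1 on the roots ε_i − ε_j (i<j≤k), value 1 on the roots ε_i + ε_j (i<j≤k), and value 0 on all other positive roots. Consequently ψ(D_{{1,…,k}}) = 2ψ(A_{k−1}) in N(D_n), where A_{k−1} ⊂ D_{{1,…,k}} is the subsystem with positive roots {ε_i − ε_j : 1 ≤ i < j ≤ k}. -/
import Mathlib


/-- Standard basis vector of `ℤⁿ`. -/
def eZ (n : ℕ) (i : Fin n) : Fin n → ℤ := fun j => if j = i then 1 else 0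

/-- The positive roots `εᵢ ± εⱼ` (`i < j`) of `D_n`. -/
def DnPos (n : ℕ) : Set (Fin n → ℤ) :=
  {v | ∃ i j : Fin n, i < j ∧ (v = eZ n i - eZ n j ∨ v = eZ n i + eZ n j)}

/-- The positive roots of the subsystem `D_{1..k}`. -/
def DkPos (n k : ℕ) : Set (Fin n → ℤ) :=
  {v | ∃ i j : Fin n, i < j ∧ (j : ℕ) < k ∧ (v = eZ n i - eZ n j ∨ v = eZ n i + eZ n j)}

/-- The positive roots `εᵢ − εⱼ` (`i < j ≤ k`) of the subsystem `A_{k−1} ⊂ D_{1..k}`. -/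
def AkPos (n k : ℕ) : Set (Fin n → ℤ) :=
  {v | ∃ i j : Fin n, i < j ∧ (j : ℕ) < k ∧ v = eZ n i - eZ n j}

/-- The image of `φ : Sym²(Λ^∨) → ℤ^{D_n⁺}`, `f ↦ (f(α))_α`. -/
def QuadImage (n : ℕ) : Submodule ℤ ({v : Fin n → ℤ // v ∈ DnPos n} → ℤ) :=
  Submodule.span ℤ {F | ∃ c : Fin n → Fin n → ℤ,
    ∀ α : {v : Fin n → ℤ // v ∈ DnPos n}, F α = ∑ i, ∑ j, c i j * (α.1 i * α.1 j)}

open Classical in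
/-- The element `ψ(Θ) = Σ_{α ∈ Θ⁺} [α]` of `ℤ^{D_n⁺}` for a set `T` of positive roots. -/
noncomputable def indFun (n : ℕ) (T : Set (Fin n → ℤ)) :
    {v : Fin n → ℤ // v ∈ DnPos n} → ℤ :=
  fun α => if α.1 ∈ T then 1 else 0

/-- The value of the quadratic form `g = Σ_{1 ≤ i < j ≤ k} xᵢxⱼ` at `v`. -/
def gVal (n k : ℕ) (v : Fin n → ℤ) : ℤ :=
  ∑ p ∈ Finset.univ.filter
      (fun p : Fin n × Fin n => p.1 < p.2 ∧ (p.2 : ℕ) < k), v p.1 * v p.2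

lemma gVal_root (n k : ℕ) (i j : Fin n) (hij : i < j) (s : ℤ) :
    gVal n k (eZ n i + s • eZ n j) = if (j : ℕ) < k then s else 0 := by
  have hne : i ≠ j := hij.ne
  set v := eZ n i + s • eZ n j with hv
  have hvi : v i = 1 := by simp [hv, eZ, hne.symm, hne]
  have hvj : v j = s := by simp [hv, eZ, hne, hne.symm]
  have hvm : ∀ m, m ≠ i → m ≠ j → v m = 0 := by
    intro m h1 h2; simp [hv, eZ, h1, h2]
  unfold gVal
  by_cases hjk : (j : ℕ) < k
  · rw [Finset.sum_eq_single_of_mem (i, j)]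
    · simp [hvi, hvj, hjk]
    · simp [hij, hjk]
    · rintro ⟨a, b⟩ hmem hne'
      simp only [Finset.mem_filter, Finset.mem_univ, true_and] at hmem
      obtain ⟨hab, hbk⟩ := hmem
      by_cases ha : a = i
      · by_cases hb : b = j
        · exact absurd (by rw [ha, hb]) hne'
        · have hbi : b ≠ i := by rintro rfl; exact absurd hab (by simp [ha])
          rw [hvm b hbi hb]; ring
      · by_cases ha' : a = j
        · have hbj : b ≠ j := by rintro rfl; exact absurd hab (by simp [ha'])
          have hbi : b ≠ i := by rintro rfl; exact absurd (hij.trans (ha' ▸ hab)) (lt_irrefl _)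
          rw [hvm b hbi hbj]; ring
        · rw [hvm a ha ha']; ring
  · rw [if_neg hjk]
    apply Finset.sum_eq_zero
    rintro ⟨a, b⟩ hmem
    simp only [Finset.mem_filter, Finset.mem_univ, true_and] at hmem
    obtain ⟨hab, hbk⟩ := hmem
    have hbj : b ≠ j := by rintro rfl; exact hjk hbk
    by_cases hb : b = i
    · have haj : a ≠ j := by rintro rfl; exact absurd (hij.trans (hb ▸ hab)) (lt_irrefl _)
      have hai : a ≠ i := hb ▸ hab.ne
      rw [hvm a hai haj]; ring
    · rw [hvm b hb hbj]; ring

lemma sub_as_add (n : ℕ) (i j : Fin n) : eZ n i - eZ n j = eZ n i + (-1 : ℤ) • eZ n j := by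
  ext m; simp [sub_eq_add_neg]

lemma gVal_double_sum (n k : ℕ) (v : Fin n → ℤ) :
    (∑ a : Fin n, ∑ b : Fin n,
      (if a < b ∧ (b : ℕ) < k then (1:ℤ) else 0) * (v a * v b)) = gVal n k v := by
  rw [gVal, Finset.sum_filter, ← Finset.univ_product_univ, Finset.sum_product]
  apply Finset.sum_congr rfl; intro a _
  apply Finset.sum_congr rfl; intro b _
  split <;> simp

theorem psi_Dk_eq_two_psi_Ak (n k : ℕ) (hk : 2 ≤ k) (hkn : k ≤ n) :
    (∀ v ∈ DnPos n,
      ((∃ i j : Fin n, i < j ∧ (j : ℕ) < k ∧ v = eZ n i - eZ n j) → gVal n k v = -1) ∧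
      ((∃ i j : Fin n, i < j ∧ (j : ℕ) < k ∧ v = eZ n i + eZ n j) → gVal n k v = 1) ∧
      (v ∉ DkPos n k → gVal n k v = 0)) ∧
    (Submodule.Quotient.mk (indFun n (DkPos n k))
        : ({v : Fin n → ℤ // v ∈ DnPos n} → ℤ) ⧸ QuadImage n)
      = (2 : ℤ) • Submodule.Quotient.mk (indFun n (AkPos n k)) := by
  have hminus : ∀ (i j : Fin n), i < j → (j : ℕ) < k → gVal n k (eZ n i - eZ n j) = -1 := by
    intro i j hij hjk
    rw [sub_as_add, gVal_root n k i j hij (-1), if_pos hjk]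
  have hplus : ∀ (i j : Fin n), i < j → (j : ℕ) < k → gVal n k (eZ n i + eZ n j) = 1 := by
    intro i j hij hjk
    have := gVal_root n k i j hij 1
    rwa [one_smul, if_pos hjk] at this
  have hzero : ∀ v ∈ DnPos n, v ∉ DkPos n k → gVal n k v = 0 := by
    rintro v ⟨i, j, hij, hv⟩ hnot
    have hjk : ¬ (j : ℕ) < k := fun h => hnot ⟨i, j, hij, h, hv⟩
    rcases hv with rfl | rfl
    · rw [sub_as_add, gVal_root n k i j hij (-1), if_neg hjk]
    · have := gVal_root n k i j hij 1
      rwa [one_smul, if_neg hjk] at this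
  constructor
  · intro v hv
    refine ⟨?_, ?_, hzero v hv⟩
    · rintro ⟨i, j, hij, hjk, rfl⟩; exact hminus i j hij hjk
    · rintro ⟨i, j, hij, hjk, rfl⟩; exact hplus i j hij hjk
  · rw [← Submodule.Quotient.mk_smul, Submodule.Quotient.eq]
    apply Submodule.subset_span
    refine ⟨fun a b => if a < b ∧ (b : ℕ) < k then 1 else 0, ?_⟩
    intro α
    rw [gVal_double_sum n k α.1]
    have hval : (indFun n (DkPos n k) - (2 : ℤ) • indFun n (AkPos n k)) α = gVal n k α.1 := by
      classical
      simp only [Pi.sub_apply, Pi.smul_apply, smul_eq_mul, indFun]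
      by_cases hA : α.1 ∈ AkPos n k
      · have hD : α.1 ∈ DkPos n k := by
          obtain ⟨i, j, hij, hjk, hv⟩ := id hA; exact ⟨i, j, hij, hjk, Or.inl hv⟩
        obtain ⟨i, j, hij, hjk, hv⟩ := id hA
        rw [if_pos hA, if_pos hD, hv, hminus i j hij hjk]; ring
      · by_cases hD : α.1 ∈ DkPos n k
        · obtain ⟨i, j, hij, hjk, hv⟩ := id hD
          rcases hv with hv | hv
          · exact absurd ⟨i, j, hij, hjk, hv⟩ hA
          · rw [if_pos hD, if_neg hA, hv, hplus i j hij hjk]; ring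
        · rw [if_neg hA, if_neg hD, hzero α.1 α.2 hD]; ring
    exact hval
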